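/- If f : ℝ → ℝ is 1-periodic, continuously differentiable, and has zero mean over [0,1], then the maximum of f² over [0,1] is at most (1/12) times the integral of (f')² over [0,1]. -/

import Mathlib

open Set intervalIntegral

theorem max_sq_le_twelfth_integral_deriv_sq
    (f : ℝ → ℝ) (hf : ContDiff ℝ 1 f) (hper : Function.Periodic f 1)
    (hmean : ∫ x in (0:ℝ)..1, f x = 0) :
    ∀ x ∈ Set.Icc (0:ℝ) 1, (f x) ^ 2 ≤ (1 / 12) * ∫ y in (0:ℝ)..1, (deriv f y) ^ 2 := by
  intro x hx
  obtain ⟨hx0, hx1⟩ := hx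
  set g := deriv f with hg
  have hfc : Continuous f := hf.continuous
  have hgc : Continuous g := hf.continuous_deriv le_rfl
  have hder : ∀ t, HasDerivAt f (g t) t := fun t =>
    ((hf.differentiable one_ne_zero) t).hasDerivAt
  have hf01 : f 1 = f 0 := by simpa using hper 0
  -- the kernel
  set h : ℝ → ℝ := fun t => (if t ≤ x then t else t - 1) - (x - 1/2) with hh
  -- h is interval integrable on any interval
  have hind : ∀ a b : ℝ, IntervalIntegrable (fun t : ℝ => if t ≤ x then (0:ℝ) else 1) MeasureTheory.volume a b := by
    intro a b
    apply MonotoneOn.intervalIntegrable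
    intro s _ t _ hst
    by_cases hs : s ≤ x <;> by_cases ht : t ≤ x <;> simp [hs, ht] <;> norm_num
    exact hs (hst.trans ht)
  have hhint : ∀ a b : ℝ, IntervalIntegrable h MeasureTheory.volume a b := by
    intro a b
    have : h = fun t => t - (if t ≤ x then (0:ℝ) else 1) - (x - 1/2) := by
      funext t; by_cases ht : t ≤ x <;> simp [hh, ht] <;> ring
    rw [this]
    exact ((intervalIntegrable_id.sub (hind a b)).sub intervalIntegrable_const)
  have hghint : ∀ a b : ℝ, IntervalIntegrable (fun t => g t * h t) MeasureTheory.volume a b := by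
    intro a b
    exact (hhint a b).continuousOn_mul hgc.continuousOn
  -- key identity : ∫ g h = f x
  have ibp1 : ∫ t in (0:ℝ)..x, (t - (x - 1/2)) * g t
      = (x - (x - 1/2)) * f x - (0 - (x - 1/2)) * f 0 - ∫ t in (0:ℝ)..x, 1 * f t := by
    apply integral_mul_deriv_eq_deriv_mul
    · intro t _; simpa using (hasDerivAt_id t).sub_const (x - 1/2)
    · intro t _; exact hder t
    · exact intervalIntegrable_const
    · exact hgc.intervalIntegrable _ _
  have ibp2 : ∫ t in x..(1:ℝ), (t - (x + 1/2)) * g t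
      = (1 - (x + 1/2)) * f 1 - (x - (x + 1/2)) * f x - ∫ t in x..(1:ℝ), 1 * f t := by
    apply integral_mul_deriv_eq_deriv_mul
    · intro t _; simpa using (hasDerivAt_id t).sub_const (x + 1/2)
    · intro t _; exact hder t
    · exact intervalIntegrable_const
    · exact hgc.intervalIntegrable _ _
  have hsplitf : (∫ t in (0:ℝ)..x, f t) + (∫ t in x..(1:ℝ), f t) = 0 := by
    rw [integral_add_adjacent_intervals (hfc.intervalIntegrable _ _) (hfc.intervalIntegrable _ _)]
    exact hmean
  have hS : ∫ t in (0:ℝ)..1, g t * h t = f x := by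
    rw [← integral_add_adjacent_intervals (hghint 0 x) (hghint x 1)]
    have e1 : ∫ t in (0:ℝ)..x, g t * h t = ∫ t in (0:ℝ)..x, (t - (x - 1/2)) * g t := by
      apply integral_congr
      intro t ht
      rw [uIcc_of_le hx0] at ht
      simp only [hh, if_pos ht.2]
      ring
    have e2 : ∫ t in x..(1:ℝ), g t * h t = ∫ t in x..(1:ℝ), (t - (x + 1/2)) * g t := by
      apply integral_congr_ae
      filter_upwards with t ht
      rw [uIoc_of_le hx1] at ht
      have : ¬ t ≤ x := not_le.mpr ht.1
      simp only [hh, if_neg this]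
      ring
    rw [e1, e2, ibp1, ibp2]
    simp only [one_mul]
    rw [hf01]
    nlinarith [hsplitf]
  -- ∫ h² = 1/12
  have hQ : ∫ t in (0:ℝ)..1, (h t)^2 = 1/12 := by
    have e : ∀ t, (h t)^2 = (t - x)^2 - |t - x| + 1/4 := by
      intro t
      rcases le_or_gt t x with ht | ht
      · rw [abs_of_nonpos (by linarith)]
        simp only [hh, if_pos ht]; ring
      · rw [abs_of_pos (by linarith)]
        simp only [hh, if_neg (not_le.mpr ht)]; ring
    simp_rw [e]
    have habs : ∫ t in (0:ℝ)..1, |t - x|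
        = (∫ t in (0:ℝ)..x, (x - t)) + ∫ t in x..(1:ℝ), (t - x) := by
      have iabs : ∀ a b : ℝ, IntervalIntegrable (fun t : ℝ => |t - x|) MeasureTheory.volume a b :=
        fun a b => ((continuous_id.sub continuous_const).abs).intervalIntegrable a b
      rw [← integral_add_adjacent_intervals (a := (0:ℝ)) (b := x) (c := (1:ℝ))
        (iabs 0 x) (iabs x 1)]
      congr 1
      · apply integral_congr
        intro t ht
        rw [uIcc_of_le hx0] at ht
        show |t - x| = x - t
        rw [abs_of_nonpos (by linarith [ht.2] : t - x ≤ 0)]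
        ring
      · apply integral_congr
        intro t ht
        rw [uIcc_of_le hx1] at ht
        exact abs_of_nonneg (by linarith [ht.1])
    have i1 : IntervalIntegrable (fun t : ℝ => (t - x)^2) MeasureTheory.volume 0 1 :=
      ((continuous_id.sub continuous_const).pow 2).intervalIntegrable 0 1
    have i2 : IntervalIntegrable (fun t : ℝ => |t - x|) MeasureTheory.volume 0 1 :=
      ((continuous_id.sub continuous_const).abs).intervalIntegrable 0 1
    rw [integral_add (i1.sub i2) intervalIntegrable_const,
      integral_sub i1 i2, habs]
    have c1 : ∫ t in (0:ℝ)..1, (t - x)^2 = ((1-x)^3 - (0-x)^3)/3 := by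
      rw [integral_comp_sub_right (fun t => t^2) x, integral_pow]

      norm_num
    have c2 : ∫ t in (0:ℝ)..x, (x - t) = x^2/2 := by
      rw [integral_sub intervalIntegrable_const intervalIntegrable_id,
        integral_id, integral_const, smul_eq_mul]
      ring
    have c3 : ∫ t in x..(1:ℝ), (t - x) = (1-x)^2/2 := by
      rw [integral_sub intervalIntegrable_id intervalIntegrable_const,
        integral_id, integral_const, smul_eq_mul]
      ring
    rw [c1, c2, c3, integral_const, smul_eq_mul]
    ring
  -- Cauchy-Schwarz via nonnegativity
  set l : ℝ := 12 * f x with hl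
  have hnn : 0 ≤ ∫ t in (0:ℝ)..1, (g t - l * h t)^2 :=
    integral_nonneg (by norm_num) (fun t _ => sq_nonneg _)
  have hexp : ∫ t in (0:ℝ)..1, (g t - l * h t)^2
      = (∫ y in (0:ℝ)..1, (g y)^2) - 2*l*(∫ t in (0:ℝ)..1, g t * h t)
        + l^2 * ∫ t in (0:ℝ)..1, (h t)^2 := by
    have e : ∀ t, (g t - l * h t)^2
        = (g t)^2 - 2*l*(g t * h t) + l^2 * (h t)^2 := by intro t; ring
    simp_rw [e]
    have ig2 : IntervalIntegrable (fun t => (g t)^2) MeasureTheory.volume 0 1 :=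
      (hgc.pow 2).intervalIntegrable _ _
    have igh : IntervalIntegrable (fun t => 2*l*(g t * h t)) MeasureTheory.volume 0 1 :=
      (hghint 0 1).const_mul _
    have ih2 : IntervalIntegrable (fun t => l^2 * (h t)^2) MeasureTheory.volume 0 1 := by
      have e2 : (fun t => l^2 * (h t)^2) = fun t => l^2 * ((t - x)^2 - |t - x| + 1/4) := by
        funext t
        congr 1
        rcases le_or_gt t x with ht | ht
        · rw [abs_of_nonpos (by linarith)]
          simp only [hh, if_pos ht]; ring
        · rw [abs_of_pos (by linarith)]
          simp only [hh, if_neg (not_le.mpr ht)]; ring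
      rw [e2]
      exact (continuous_const.mul ((((continuous_id.sub continuous_const).pow 2).sub
        (continuous_id.sub continuous_const).abs).add continuous_const)).intervalIntegrable 0 1
    rw [integral_add (ig2.sub igh) ih2,
      integral_sub ig2 igh,
      integral_const_mul, integral_const_mul]
  rw [hexp, hS, hQ] at hnn
  nlinarith [hnn]
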